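/- The protocol P^intent is an intersection protocol (satisfies Validity, Safety, and Liveness) and is lexicographically optimal with respect to γ_intent(F) for each adversary model F ∈ {CR, SO}. -/

import Mathlib

open scoped Classical

noncomputable section

namespace Inter

/-- Actions available to each agent. -/
inductive Act where
  | go
  | noop
deriving DecidableEq

/-- A move through the intersection: an incoming lane paired with an outgoing lane. -/
abbrev Move (kin kout : ℕ) := Fin kin × Fin kout

/-- An adversary: a conflict-free arrival schedule, a transmission environment and
transmitter/receiver failure functions. -/
structure Adversary (kin kout : ℕ) where
  arrive : ℕ → ℕ × Fin kin × Fin kout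
  conflictFree : ∀ i j : ℕ, i ≠ j → (arrive i).1 = (arrive j).1 →
    (arrive i).2.1 ≠ (arrive j).2.1
  T : Set ((Fin kin × ℕ) × (Fin kin × ℕ))
  T_front : ∀ l l' : Fin kin, ((l, 0), (l', 0)) ∈ T
  Ft : ℕ → ℕ → Bool
  Fr : ℕ → ℕ → Bool

/-- The lane component of a sensor reading: an incoming lane, ⊥ (not yet arrived),
or ⊤ (departed). -/
inductive LaneStatus (kin : ℕ) where
  | inLane (l : Fin kin)
  | notArrived
  | finished

/-- The minimal sensor reading: front, lane and intent. -/
structure Reading (kin kout : ℕ) where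
  front : Prop
  lane : LaneStatus kin
  intent : Fin kout

/-- Environment states record the adversary, the time, a queue for each incoming lane
and the set of departed agents. -/
structure EnvState (kin kout : ℕ) where
  adv : Adversary kin kout
  time : ℕ
  queue : Fin kin → List ℕ
  done : Set ℕ

/-- Local states: a memory state together with a sensor reading
(the minimal reading plus possibly extra sensor information). -/
abbrev LState (kin kout : ℕ) (Mem Extra : Type*) := Mem × Reading kin kout × Extra

/-- Global states: an environment state and local states for all agents. -/
abbrev GState (kin kout : ℕ) (Mem Extra : Type*) :=
  EnvState kin kout × (ℕ → LState kin kout Mem Extra)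

/-- A run. -/
abbrev Run (kin kout : ℕ) (Mem Extra : Type*) := ℕ → GState kin kout Mem Extra

/-- An action protocol maps each agent's local state to an action. -/
abbrev Prot (kin kout : ℕ) (Mem Extra : Type*) := ℕ → LState kin kout Mem Extra → Act

variable {kin kout : ℕ} {Mem Extra Msg : Type*}

/-- Agent `i` is at the front of some queue. -/
def isFront (e : EnvState kin kout) (i : ℕ) : Prop :=
  ∃ l : Fin kin, (e.queue l).head? = some i

/-- The (lane, position) of agent `i`, if it is in some queue. -/
def posAt (e : EnvState kin kout) (i : ℕ) : Option (Fin kin × ℕ) :=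
  if h : ∃ l : Fin kin, i ∈ e.queue l then some (h.choose, (e.queue h.choose).idxOf i)
  else none

/-- The intended departure lane of agent `i`, as given by the arrival schedule. -/
def intentOf (e : EnvState kin kout) (i : ℕ) : Fin kout := (e.adv.arrive i).2.2

/-- The move `(lane_i, intent_i)` of agent `i`, if it is in some queue. -/
def moveAt (e : EnvState kin kout) (i : ℕ) : Option (Move kin kout) :=
  (posAt e i).map (fun p => (p.1, intentOf e i))

/-- The minimal sensor reading of agent `i` in environment state `e`. -/
def minimalReading (e : EnvState kin kout) (i : ℕ) : Reading kin kout where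
  front := isFront e i
  lane :=
    if h : ∃ l : Fin kin, i ∈ e.queue l then LaneStatus.inLane h.choose
    else if i ∈ e.done then LaneStatus.finished else LaneStatus.notArrived
  intent := intentOf e i

/-- An information-exchange protocol: initial memories, extra sensor information,
a message function and a memory-update function. -/
structure IEP (kin kout : ℕ) (Mem Extra Msg : Type*) where
  initMem : ℕ → Mem
  extra : EnvState kin kout → ℕ → Extra
  msg : ℕ → LState kin kout Mem Extra → Act → Reading kin kout × Extra → Option Msg
  upd : ℕ → LState kin kout Mem Extra → Act → Set Msg → Mem

/-- One round of the system: agents act, queues are updated (dequeues for agents that go,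
enqueues for new arrivals), new sensor readings are taken, messages are broadcast and
received subject to the transmission environment and the failure functions, and memories
are updated. -/
def step (E : IEP kin kout Mem Extra Msg) (P : Prot kin kout Mem Extra)
    (g : GState kin kout Mem Extra) : GState kin kout Mem Extra :=
  let e := g.1
  let act : ℕ → Act := fun i => P i (g.2 i)
  let q' : Fin kin → List ℕ := fun l =>
    let q1 := match (e.queue l).head? with
      | some i => if act i = Act.go then (e.queue l).tail else e.queue l
      | none => e.queue l
    if h : ∃ i l', e.adv.arrive i = (e.time + 1, l, l') then q1 ++ [h.choose] else q1
  let done' : Set ℕ := e.done ∪ {i | isFront e i ∧ act i = Act.go}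
  let e' : EnvState kin kout := ⟨e.adv, e.time + 1, q', done'⟩
  let sens : ℕ → Reading kin kout × Extra := fun i => (minimalReading e' i, E.extra e' i)
  let rcv : ℕ → Set Msg := fun i =>
    if e.adv.Fr e.time i = true ∧ (posAt e' i).isSome = true then
      {m | ∃ j pj pi, E.msg j (g.2 j) (act j) (sens j) = some m ∧
            e.adv.Ft e.time j = true ∧
            posAt e' j = some pj ∧ posAt e' i = some pi ∧ (pj, pi) ∈ e.adv.T}
    else ∅
  (e', fun i => (E.upd i (g.2 i) (act i) (rcv i), sens i))

/-- An intersection context: an information-exchange protocol together with an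
adversary model. -/
structure Ctx (kin kout : ℕ) (Mem Extra Msg : Type*) where
  iep : IEP kin kout Mem Extra Msg
  adv : Set (Adversary kin kout)

/-- Initial global states: time 0, empty queues, no departed agents, an adversary
from the adversary model, and initial local states. -/
def Init (C : Ctx kin kout Mem Extra Msg) (g : GState kin kout Mem Extra) : Prop :=
  g.1.adv ∈ C.adv ∧ g.1.time = 0 ∧ (∀ l, g.1.queue l = []) ∧ g.1.done = ∅ ∧
  ∀ i, g.2 i = (C.iep.initMem i, minimalReading g.1 i, C.iep.extra g.1 i)

/-- The interpreted system `I_{γ,P}`: the set of runs of protocol `P` in context `γ`. -/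
def Runs (C : Ctx kin kout Mem Extra Msg) (P : Prot kin kout Mem Extra) :
    Set (Run kin kout Mem Extra) :=
  {r | Init C (r 0) ∧ ∀ m, r (m + 1) = step C.iep P (r m)}

/-- `front_i` holds at the point `(r,m)`. -/
def frontAt (r : Run kin kout Mem Extra) (m i : ℕ) : Prop := isFront (r m).1 i

/-- `going_i` abbreviates `front_i ∧ ◯¬front_i`. -/
def goingAt (r : Run kin kout Mem Extra) (m i : ℕ) : Prop :=
  frontAt r m i ∧ ¬ frontAt r (m + 1) i

/-- `GO(r,m)`: the set of agents that go through the intersection in round `m+1`. -/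
def GOs (r : Run kin kout Mem Extra) (m : ℕ) : Set ℕ := {i | goingAt r m i}

/-- Validity: an agent goes through the intersection only from the front of its queue. -/
def ValidityP (C : Ctx kin kout Mem Extra Msg) (P : Prot kin kout Mem Extra) : Prop :=
  ∀ r ∈ Runs C P, ∀ m i, goingAt r m i → frontAt r m i

/-- Safety: agents that go simultaneously have compatible moves. -/
def SafetyP (O : Move kin kout → Move kin kout → Prop)
    (C : Ctx kin kout Mem Extra Msg) (P : Prot kin kout Mem Extra) : Prop :=
  ∀ r ∈ Runs C P, ∀ m i j, i ≠ j → goingAt r m i → goingAt r m j →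
    ∀ mi mj, moveAt (r m).1 i = some mi → moveAt (r m).1 j = some mj → O mi mj

/-- Liveness: every agent at the front of a queue eventually goes. -/
def LivenessP (C : Ctx kin kout Mem Extra Msg) (P : Prot kin kout Mem Extra) : Prop :=
  ∀ r ∈ Runs C P, ∀ m i, frontAt r m i → ∃ m' ≥ m, goingAt r m' i

/-- An intersection protocol: an action protocol satisfying Validity, Safety and Liveness. -/
def IsIntersectionProtocol (O : Move kin kout → Move kin kout → Prop)
    (C : Ctx kin kout Mem Extra Msg) (P : Prot kin kout Mem Extra) : Prop :=
  ValidityP C P ∧ SafetyP O C P ∧ LivenessP C P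

/-- `safe-to-go_i` at `(r,m)`: `i` is at the front of its queue (position 0) and the moves
of the agents in `GO(r,m) ∪ {i}` are pairwise compatible. -/
def safeToGo (O : Move kin kout → Move kin kout → Prop)
    (r : Run kin kout Mem Extra) (m i : ℕ) : Prop :=
  (∃ p, posAt (r m).1 i = some p ∧ p.2 = 0) ∧
  ∀ j ∈ GOs r m ∪ {i}, ∀ k ∈ GOs r m ∪ {i}, j ≠ k →
    ∀ mj mk, moveAt (r m).1 j = some mj → moveAt (r m).1 k = some mk → O mj mk

/-- `P` has unnecessary waiting with respect to `γ`. -/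
def UnnecessaryWaiting (O : Move kin kout → Move kin kout → Prop)
    (C : Ctx kin kout Mem Extra Msg) (P : Prot kin kout Mem Extra) : Prop :=
  ∃ r ∈ Runs C P, ∃ m i, safeToGo O r m i ∧ i ∉ GOs r m

/-- The time at which agent `i` goes through the intersection in run `r` (∞ if never). -/
def gotime (r : Run kin kout Mem Extra) (i : ℕ) : ℕ∞ :=
  sInf {n : ℕ∞ | ∃ m : ℕ, goingAt r m i ∧ n = (m : ℕ∞)}

/-- `P` dominates `P'`: on all corresponding runs, every agent goes at least as early. -/
def Dominates (C : Ctx kin kout Mem Extra Msg) (P P' : Prot kin kout Mem Extra) : Prop :=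
  ∀ r ∈ Runs C P, ∀ r' ∈ Runs C P', r 0 = r' 0 → ∀ i, gotime r i ≤ gotime r' i

def StrictDominates (C : Ctx kin kout Mem Extra Msg) (P P' : Prot kin kout Mem Extra) : Prop :=
  Dominates C P P' ∧ ¬ Dominates C P' P

/-- `P` is optimal: no intersection protocol strictly dominates it. -/
def Optimal (O : Move kin kout → Move kin kout → Prop)
    (C : Ctx kin kout Mem Extra Msg) (P : Prot kin kout Mem Extra) : Prop :=
  ¬ ∃ P' : Prot kin kout Mem Extra,
      IsIntersectionProtocol O C P' ∧ StrictDominates C P' P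

/-- `P` lexicographically dominates `P'`. -/
def LexDominates (C : Ctx kin kout Mem Extra Msg) (P P' : Prot kin kout Mem Extra) : Prop :=
  ∀ r ∈ Runs C P, ∀ r' ∈ Runs C P', r 0 = r' 0 →
    (∀ m, GOs r m = GOs r' m) ∨
    ∃ m, (∀ k < m, GOs r k = GOs r' k) ∧ GOs r m ≠ GOs r' m ∧ GOs r' m ⊂ GOs r m

def StrictLexDominates (C : Ctx kin kout Mem Extra Msg) (P P' : Prot kin kout Mem Extra) :
    Prop :=
  LexDominates C P P' ∧ ¬ LexDominates C P' P

/-- `P` is lexicographically optimal: no intersection protocol strictly lexicographically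
dominates it. -/
def LexOptimal (O : Move kin kout → Move kin kout → Prop)
    (C : Ctx kin kout Mem Extra Msg) (P : Prot kin kout Mem Extra) : Prop :=
  ¬ ∃ P' : Prot kin kout Mem Extra,
      IsIntersectionProtocol O C P' ∧ StrictLexDominates C P' P

/-- Knowledge: `K_i φ` holds at `(r,m)` iff `φ` holds at all points of the system where
agent `i` has the same local state. -/
def Kn (S : Set (Run kin kout Mem Extra)) (i : ℕ)
    (φ : Run kin kout Mem Extra → ℕ → Prop) (r : Run kin kout Mem Extra) (m : ℕ) : Prop :=
  ∀ r' ∈ S, ∀ m', (r' m').2 i = (r m).2 i → φ r' m'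

/-- The adversary model has no failures. -/
def NoFailures (C : Ctx kin kout Mem Extra Msg) : Prop :=
  ∀ α ∈ C.adv, ∀ k i, α.Ft k i = true ∧ α.Fr k i = true

/-- Full information exchange: every agent broadcasts (an injective encoding of) its
entire local state in every round, and records every broadcast it receives. -/
def FullInfo (C : Ctx kin kout Mem Extra Msg) : Prop :=
  (∃ enc : LState kin kout Mem Extra → Msg, Function.Injective enc ∧
      ∀ i s a o, C.iep.msg i s a o = some (enc s)) ∧
  (∀ i s a, Function.Injective fun B : Set Msg => C.iep.upd i s a B)

/-- A sufficiently rich context: every agent that will be at the front of some lane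
broadcasts a message encoding its lane and intent, tagged as coming from the front;
no other message is tagged as a front message; and each agent records the
(lane, intent) pair of each front agent it hears from. -/
def SufficientlyRich (C : Ctx kin kout Mem Extra Msg) : Prop :=
  ∃ dec : Msg → Option (Move kin kout),
    (∀ i s a (o : Reading kin kout × Extra) (l : Fin kin),
        o.1.front → o.1.lane = LaneStatus.inLane l →
        ∃ msg, C.iep.msg i s a o = some msg ∧ dec msg = some (l, o.1.intent)) ∧
    (∀ i s a (o : Reading kin kout × Extra), ¬ o.1.front →
        ∀ msg, C.iep.msg i s a o = some msg → dec msg = none) ∧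
    (∃ rec : Mem → Set (Move kin kout),
        ∀ i s a B, rec (C.iep.upd i s a B) = {mv | ∃ msg ∈ B, dec msg = some mv})

/-- The set of agents at the front of a queue. -/
def FrontSet (e : EnvState kin kout) : Set ℕ := {i | isFront e i}

/-- `P` depends only on the agents at the front of their queues. -/
def DependsOnlyOnFront (C : Ctx kin kout Mem Extra Msg) (P : Prot kin kout Mem Extra) :
    Prop :=
  ∀ r ∈ Runs C P, ∀ r' ∈ Runs C P, ∀ m m' i,
    FrontSet (r m).1 = FrontSet (r' m').1 → P i ((r m).2 i) = P i ((r' m').2 i)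

/-- The choices of an adversary in a single round: arrivals, the transmission
environment and the failure values. -/
structure Choice (kin kout : ℕ) where
  arrivals : Set (ℕ × Fin kin × Fin kout)
  T : Set ((Fin kin × ℕ) × (Fin kin × ℕ))
  Ft : ℕ → Bool
  Fr : ℕ → Bool

/-- The choices of adversary `α` in round `m+1`. -/
def choiceAt (α : Adversary kin kout) (m : ℕ) : Choice kin kout where
  arrivals := {p | α.arrive p.1 = (m + 1, p.2.1, p.2.2)}
  T := α.T
  Ft := fun i => α.Ft m i
  Fr := fun i => α.Fr m i

/-- The adversary history `H(α,m) = ⟨α_0, …, α_{m-1}⟩`. -/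
def hist (α : Adversary kin kout) (m : ℕ) : List (Choice kin kout) :=
  (List.range m).map (choiceAt α)

/-- The adversary history of run `r` up to time `m`. -/
def histOf (r : Run kin kout Mem Extra) (m : ℕ) : List (Choice kin kout) :=
  hist (r 0).1.adv m

/-- An intersection policy: a map from adversary histories to sets of permitted moves. -/
abbrev Policy (kin kout : ℕ) := List (Choice kin kout) → Set (Move kin kout)

/-- The set `H_γ` of adversary histories of the context. -/
def Hists (C : Ctx kin kout Mem Extra Msg) : Set (List (Choice kin kout)) :=
  {h | ∃ α ∈ C.adv, ∃ m, h = hist α m}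

/-- A feasible infinite sequence of histories: one arising from a single adversary. -/
def Feasible (F : Set (Adversary kin kout)) (h : ℕ → List (Choice kin kout)) : Prop :=
  ∃ α ∈ F, ∀ m, h m = hist α m

/-- Conflict-freedom of an intersection policy. -/
def ConflictFree (O : Move kin kout → Move kin kout → Prop)
    (C : Ctx kin kout Mem Extra Msg) (σ : Policy kin kout) : Prop :=
  ∀ h ∈ Hists C, ∀ mv ∈ σ h, ∀ mv' ∈ σ h, mv ≠ mv' → O mv mv'

/-- Fairness of an intersection policy. -/
def FairPolicy (C : Ctx kin kout Mem Extra Msg) (σ : Policy kin kout) : Prop :=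
  ∀ h : ℕ → List (Choice kin kout), Feasible C.adv h →
    ∀ mv : Move kin kout, ∀ m, ∃ m' ≥ m, mv ∈ σ (h m')

/-- A correct intersection policy: conflict-free and fair. -/
def CorrectPolicy (O : Move kin kout → Move kin kout → Prop)
    (C : Ctx kin kout Mem Extra Msg) (σ : Policy kin kout) : Prop :=
  ConflictFree O C σ ∧ FairPolicy C σ

/-- A synchronous context: the time is encoded in each agent's local state. -/
def Synchronous (C : Ctx kin kout Mem Extra Msg) : Prop :=
  ∃ clock : LState kin kout Mem Extra → ℕ,
    ∀ P : Prot kin kout Mem Extra, ∀ r ∈ Runs C P, ∀ m i, clock ((r m).2 i) = m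

/-- The knowledge condition of the knowledge-based program `P^σ`:
`front_i ∧ (lane_i, intent_i) ∈ σ`. -/
def phiSigma (σ : Policy kin kout) (i : ℕ) (r : Run kin kout Mem Extra) (m : ℕ) : Prop :=
  frontAt r m i ∧ ∃ mv, moveAt (r m).1 i = some mv ∧ mv ∈ σ (histOf r m)

/-- `P` implements the knowledge-based program `if K_i φ_i then go else noop` in `γ`. -/
def Implements (C : Ctx kin kout Mem Extra Msg) (P : Prot kin kout Mem Extra)
    (φ : ℕ → Run kin kout Mem Extra → ℕ → Prop) : Prop :=
  ∀ r ∈ Runs C P, ∀ m i, (P i ((r m).2 i) = Act.go ↔ Kn (Runs C P) i (φ i) r m)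

/-- Behavioral equivalence: the protocols take the same actions at all reachable states. -/
def BehEq (C : Ctx kin kout Mem Extra Msg) (P P' : Prot kin kout Mem Extra) : Prop :=
  (∀ r ∈ Runs C P, ∀ m i, P i ((r m).2 i) = P' i ((r m).2 i)) ∧
  (∀ r ∈ Runs C P', ∀ m i, P i ((r m).2 i) = P' i ((r m).2 i))

/-- `γ` is `σ`-aware. -/
def SigmaAware (C : Ctx kin kout Mem Extra Msg) (σ : Policy kin kout) : Prop :=
  ∀ P : Prot kin kout Mem Extra, ∀ r ∈ Runs C P, ∀ m i (l : Fin kin) (l' : Fin kout),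
    (l, l') ∈ σ (histOf r m) → i ∈ (r m).1.queue l →
    Kn (Runs C P) i (fun r' m' => (l, l') ∈ σ (histOf r' m')) r m

/-- `γ` is `next`-aware. -/
def NextAware (C : Ctx kin kout Mem Extra Msg)
    (next : List (Choice kin kout) → Fin kin) : Prop :=
  ∀ P : Prot kin kout Mem Extra, ∀ r ∈ Runs C P, ∀ m i (l : Fin kin),
    next (histOf r m) = l →
    Kn (Runs C P) i (fun r' m' => next (histOf r' m') = l) r m

/-- Cyclic distance from `a` to `b` (mod `kin`). -/
def distC (a b : Fin kin) : ℕ := (b.val + kin - a.val) % kin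

/-- `l` lies in the cyclic interval `[a, b)` of incoming lanes. -/
def inCyc (a b l : Fin kin) : Prop := distC a l < distC a b

/-- `mv` is compatible with every move in `S`. -/
def compatAll (O : Move kin kout → Move kin kout → Prop)
    (S : Set (Move kin kout)) (mv : Move kin kout) : Prop :=
  ∀ mv' ∈ S, O mv mv'

/-- The proposition `V_i` of the knowledge-based program `𝐏`. -/
def Vprop (O : Move kin kout → Move kin kout → Prop) (σ : Policy kin kout)
    (next : List (Choice kin kout) → Fin kin) (i : ℕ)
    (r : Run kin kout Mem Extra) (m : ℕ) : Prop :=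
  ∃ mv, moveAt (r m).1 i = some mv ∧ mv ∉ σ (histOf r m) ∧
    (∀ j mj, goingAt r m j → moveAt (r m).1 j = some mj →
        mj ∈ σ (histOf r m) → O mv mj) ∧
    (∀ j mj, j ≠ i → goingAt r m j → moveAt (r m).1 j = some mj →
        mj ∉ σ (histOf r m) → inCyc (next (histOf r m)) mv.1 mj.1 → O mv mj)

/-- The knowledge condition of the knowledge-based program `𝐏`:
`front_i ∧ ((lane_i, intent_i) ∈ σ ∨ V_i)`. -/
def phiP (O : Move kin kout → Move kin kout → Prop) (σ : Policy kin kout)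
    (next : List (Choice kin kout) → Fin kin) (i : ℕ)
    (r : Run kin kout Mem Extra) (m : ℕ) : Prop :=
  frontAt r m i ∧
    ((∃ mv, moveAt (r m).1 i = some mv ∧ mv ∈ σ (histOf r m)) ∨ Vprop O σ next i r m)

/-- Fairness of a `next` function. -/
def FairNext (C : Ctx kin kout Mem Extra Msg)
    (next : List (Choice kin kout) → Fin kin) : Prop :=
  ∀ h : ℕ → List (Choice kin kout), Feasible C.adv h →
    ∀ m (l : Fin kin), ∃ m' ≥ m, next (h m') = l

/-- Fairness of a pair `(σ, next)`. -/
def PairFair (O : Move kin kout → Move kin kout → Prop)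
    (C : Ctx kin kout Mem Extra Msg) (σ : Policy kin kout)
    (next : List (Choice kin kout) → Fin kin) : Prop :=
  ∀ h : ℕ → List (Choice kin kout), Feasible C.adv h →
    ∀ m (mv : Move kin kout), ∃ m' ≥ m,
      mv ∈ σ (h m') ∨ (next (h m') = mv.1 ∧ compatAll O (σ (h m')) mv)

/-- `next(h) = |h| mod |L_in|` at time `t`. -/
def nextL (hkin : 0 < kin) (t : ℕ) : Fin kin := ⟨t % kin, Nat.mod_lt _ hkin⟩

/-- The stages of the construction of the set `Pos_i`, starting from the lane `nxt` and
proceeding in cyclic order; `M` is the set of moves received from front agents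
(empty when there is no communication). -/
def posStage (hkin : 0 < kin) (O : Move kin kout → Move kin kout → Prop)
    (M : Set (Move kin kout)) (nxt : Fin kin) : ℕ → Set (Move kin kout)
  | 0 => ∅
  | t + 1 =>
    let S := posStage hkin O M nxt t
    let l : Fin kin := ⟨(nxt.val + t) % kin, Nat.mod_lt _ hkin⟩
    if ∃ l' : Fin kout, (l, l') ∈ M then
      S ∪ {mv | mv.1 = l ∧ mv ∈ M ∧ compatAll O S mv}
    else
      S ∪ {mv | mv.1 = l ∧ compatAll O S mv}

/-- The set `Pos_i` computed from the received moves `M`, the lane `nxt = next` and the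
agent's own lane `lanei`. -/
def PosSet (hkin : 0 < kin) (O : Move kin kout → Move kin kout → Prop)
    (M : Set (Move kin kout)) (nxt lanei : Fin kin) : Set (Move kin kout) :=
  posStage hkin O M nxt (distC nxt lanei)

/-- The stage `Pos_i^l` of the construction of `Pos_i`, for a lane `l` in the cyclic
interval `[nxt, lane_i)`. -/
def PosUpTo (hkin : 0 < kin) (O : Move kin kout → Move kin kout → Prop)
    (M : Set (Move kin kout)) (nxt l : Fin kin) : Set (Move kin kout) :=
  posStage hkin O M nxt (distC nxt l + 1)

/-- The adversary model with no failures. -/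
def NFadv (kin kout : ℕ) : Set (Adversary kin kout) :=
  {α | ∀ k i, α.Ft k i = true ∧ α.Fr k i = true}

/-- The adversary model with crash failures. -/
def CRadv (kin kout : ℕ) : Set (Adversary kin kout) :=
  {α | (∀ k i, α.Fr k i = true) ∧
    ∀ k i, α.Ft k i = false → ∀ k', k < k' → α.Ft k' i = false}

/-- The adversary model with sending omissions. -/
def SOadv (kin kout : ℕ) : Set (Adversary kin kout) :=
  {α | ∀ k i, α.Fr k i = true}

/-- The information-exchange protocol of `γ_∅`: a single memory state, no messages,
and sensor readings `⟨front_i, lane_i, intent_i, time_i⟩`. -/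
def E0 (kin kout : ℕ) : IEP kin kout Unit ℕ Empty where
  initMem _ := ()
  extra e _ := e.time
  msg _ _ _ _ := none
  upd _ _ _ _ := ()

/-- The context `γ_∅(F)`. -/
def gammaEmpty (kin kout : ℕ) (F : Set (Adversary kin kout)) : Ctx kin kout Unit ℕ Empty :=
  ⟨E0 kin kout, F⟩

/-- The protocol `P^∅`: go iff at the front and own move compatible with `Pos_i`. -/
def Pempty (hkin : 0 < kin) (O : Move kin kout → Move kin kout → Prop) :
    Prot kin kout Unit ℕ := fun _ s =>
  match s.2.1.lane with
  | LaneStatus.inLane l =>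
      if s.2.1.front ∧ compatAll O (PosSet hkin O ∅ (nextL hkin s.2.2) l) (l, s.2.1.intent)
      then Act.go else Act.noop
  | _ => Act.noop

/-- The information-exchange protocol of `γ_intent`: exactly the agents at the front of a
lane broadcast `(lane_i, intent_i)`; the memory is the set of moves received in the
current round; sensor readings are `⟨front_i, lane_i, intent_i, time_i⟩`. -/
def Eintent (kin kout : ℕ) : IEP kin kout (Set (Move kin kout)) ℕ (Move kin kout) where
  initMem _ := ∅
  extra e _ := e.time
  msg _ _ _ o :=
    if o.1.front then
      match o.1.lane with
      | LaneStatus.inLane l => some (l, o.1.intent)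
      | _ => none
    else none
  upd _ _ _ B := B

/-- The context `γ_intent(F)`. -/
def gammaIntent (kin kout : ℕ) (F : Set (Adversary kin kout)) :
    Ctx kin kout (Set (Move kin kout)) ℕ (Move kin kout) :=
  ⟨Eintent kin kout, F⟩

/-- The protocol `P^intent`: go iff at the front and own move compatible with `Pos_i`
computed from the received moves. -/
def Pintent (hkin : 0 < kin) (O : Move kin kout → Move kin kout → Prop) :
    Prot kin kout (Set (Move kin kout)) ℕ := fun _ s =>
  match s.2.1.lane with
  | LaneStatus.inLane l =>
      if s.2.1.front ∧
          compatAll O (PosSet hkin O s.1 (nextL hkin s.2.2) l) (l, s.2.1.intent)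
      then Act.go else Act.noop
  | _ => Act.noop

section Extra

variable {kin kout : ℕ}

lemma distC_self (a : Fin kin) : distC a a = 0 := by
  unfold distC
  have h : a.val + kin - a.val = kin := by omega
  rw [h, Nat.mod_self]

lemma distC_lt (hkin : 0 < kin) (a b : Fin kin) : distC a b < kin :=
  Nat.mod_lt _ hkin

lemma distC_add (a b : Fin kin) {t : ℕ} (ht : t < kin)
    (hb : b.val = (a.val + t) % kin) : distC a b = t := by
  have ha := a.isLt
  unfold distC
  rw [hb]
  rcases Nat.lt_or_ge (a.val + t) kin with h | h
  · rw [Nat.mod_eq_of_lt h]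
    have h2 : a.val + t + kin - a.val = t + kin := by omega
    rw [h2, Nat.add_mod_right, Nat.mod_eq_of_lt ht]
  · have h1 : (a.val + t) % kin = a.val + t - kin := by
      rw [Nat.mod_eq_sub_mod h, Nat.mod_eq_of_lt (by omega)]
    rw [h1]
    have h2 : a.val + t - kin + kin - a.val = t := by omega
    rw [h2, Nat.mod_eq_of_lt ht]

lemma distC_recover (a b : Fin kin) : (a.val + distC a b) % kin = b.val := by
  have hb := b.isLt; have ha := a.isLt
  unfold distC
  rcases Nat.lt_or_ge (b.val + kin) (a.val + kin) with h | h
  · -- b < a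
    have hba : b.val < a.val := by omega
    have h1 : (b.val + kin - a.val) < kin := by omega
    rw [Nat.mod_eq_of_lt h1]
    have h2 : a.val + (b.val + kin - a.val) = b.val + kin := by omega
    rw [h2, Nat.add_mod_right, Nat.mod_eq_of_lt hb]
  · have hba : a.val ≤ b.val := by omega
    rcases Nat.eq_or_lt_of_le ha.le with hk | hk
    · omega
    have h1 : b.val + kin - a.val = (b.val - a.val) + kin := by omega
    rw [h1, Nat.add_mod_right, Nat.mod_eq_of_lt (by omega : b.val - a.val < kin)]
    have h2 : a.val + (b.val - a.val) = b.val := by omega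
    rw [h2, Nat.mod_eq_of_lt hb]

lemma distC_inj (a : Fin kin) {b c : Fin kin} (h : distC a b = distC a c) : b = c := by
  have hb := distC_recover a b
  have hc := distC_recover a c
  rw [h] at hb
  exact Fin.ext (hb ▸ hc ▸ rfl)

lemma compatAll_empty (O : Move kin kout → Move kin kout → Prop) (mv : Move kin kout) :
    compatAll O ∅ mv := fun _ h => absurd h (Set.notMem_empty _)

lemma posStage_succ_subset (hkin : 0 < kin) (O : Move kin kout → Move kin kout → Prop)
    (M : Set (Move kin kout)) (nxt : Fin kin) (t : ℕ) :
    posStage hkin O M nxt t ⊆ posStage hkin O M nxt (t + 1) := by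
  intro mv h
  unfold posStage
  dsimp only
  split <;> exact Set.mem_union_left _ h

lemma posStage_mono (hkin : 0 < kin) (O : Move kin kout → Move kin kout → Prop)
    (M : Set (Move kin kout)) (nxt : Fin kin) {t t' : ℕ} (h : t ≤ t') :
    posStage hkin O M nxt t ⊆ posStage hkin O M nxt t' := by
  induction t' with
  | zero => simpa [Nat.le_zero.mp h]
  | succ n ih =>
    rcases Nat.eq_or_lt_of_le h with h1 | h1
    · exact h1 ▸ le_refl _
    · exact (ih (by omega)).trans (posStage_succ_subset hkin O M nxt n)

/-- Key structural lemma: every member of `posStage` entered at the stage of its own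
lane, was compatible with everything before, and belongs to `M` if `M` mentions its lane. -/
lemma posStage_mem (hkin : 0 < kin) (O : Move kin kout → Move kin kout → Prop)
    (M : Set (Move kin kout)) (nxt : Fin kin) {t : ℕ} (ht : t ≤ kin)
    {mv : Move kin kout} (h : mv ∈ posStage hkin O M nxt t) :
    distC nxt mv.1 < t ∧
    compatAll O (posStage hkin O M nxt (distC nxt mv.1)) mv ∧
    ((∃ w, (mv.1, w) ∈ M) → mv ∈ M) := by
  induction t with
  | zero => exact absurd h (Set.notMem_empty _)
  | succ n ih =>
    have hn : n < kin := by omega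
    have hlane : distC nxt (⟨(nxt.val + n) % kin, Nat.mod_lt _ hkin⟩ : Fin kin) = n :=
      distC_add _ _ hn rfl
    unfold posStage at h
    dsimp only at h
    split at h
    case isTrue hM =>
      rcases h with h | h
      · obtain ⟨h1, h2, h3⟩ := ih (by omega) h
        exact ⟨by omega, h2, h3⟩
      · obtain ⟨h1, h2, h3⟩ := h
        have hd : distC nxt mv.1 = n := h1 ▸ hlane
        exact ⟨by omega, hd ▸ h3, fun _ => h2⟩
    case isFalse hM =>
      rcases h with h | h
      · obtain ⟨h1, h2, h3⟩ := ih (by omega) h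
        exact ⟨by omega, h2, h3⟩
      · obtain ⟨h1, h2⟩ := h
        have hd : distC nxt mv.1 = n := h1 ▸ hlane
        refine ⟨by omega, hd ▸ h2, fun ⟨w, hw⟩ => absurd ⟨w, h1 ▸ hw⟩ hM⟩

/-- Insertion lemma: a move compatible with all previous stages enters `posStage` at the
stage of its own lane, provided it is in `M` or no move of its lane is in `M`. -/
lemma posStage_insert (hkin : 0 < kin) (O : Move kin kout → Move kin kout → Prop)
    (M : Set (Move kin kout)) (nxt : Fin kin) {mv : Move kin kout}
    (hcompat : compatAll O (posStage hkin O M nxt (distC nxt mv.1)) mv)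
    (hM : mv ∈ M ∨ ¬∃ w, (mv.1, w) ∈ M) :
    mv ∈ posStage hkin O M nxt (distC nxt mv.1 + 1) := by
  set t := distC nxt mv.1 with hd
  have hlane : (⟨(nxt.val + t) % kin, Nat.mod_lt _ hkin⟩ : Fin kin) = mv.1 :=
    Fin.ext (distC_recover nxt mv.1)
  show mv ∈ posStage hkin O M nxt (t + 1)
  unfold posStage
  dsimp only
  split
  case isTrue h =>
    refine Set.mem_union_right _ ⟨hlane.symm, ?_, hcompat⟩
    rcases hM with h1 | h1
    · exact h1
    · exact absurd (by rw [hlane] at h; exact h) h1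
  case isFalse h =>
    exact Set.mem_union_right _ ⟨hlane.symm, hcompat⟩

end Extra
section RunLemmas

variable {kin kout : ℕ} {Mem Extra Msg : Type*}

lemma head?_mem {l : List ℕ} {a : ℕ} (h : l.head? = some a) : a ∈ l := by
  cases l with
  | nil => simp at h
  | cons b t => simp at h; simp [h]

lemma head?_cons {l : List ℕ} {a : ℕ} (h : l.head? = some a) : l = a :: l.tail := by
  cases l with
  | nil => simp at h
  | cons b t => simp at h; simp [h]

/-- The run invariant: queues have no duplicates, agents are in at most one queue, and
queue members' arrival data is consistent. -/
def Inv (e : EnvState kin kout) : Prop :=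
  (∀ l, (e.queue l).Nodup) ∧
  (∀ i (l l' : Fin kin), i ∈ e.queue l → i ∈ e.queue l' → l = l') ∧
  (∀ i (l : Fin kin), i ∈ e.queue l →
    (e.adv.arrive i).2.1 = l ∧ (e.adv.arrive i).1 ≤ e.time ∧ 1 ≤ (e.adv.arrive i).1)

lemma step_env (E : IEP kin kout Mem Extra Msg) (P : Prot kin kout Mem Extra)
    (g : GState kin kout Mem Extra) :
    (step E P g).1 = ⟨g.1.adv, g.1.time + 1,
      fun l =>
        if h : ∃ i l', g.1.adv.arrive i = (g.1.time + 1, l, l') then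
          (match (g.1.queue l).head? with
            | some i => if P i (g.2 i) = Act.go then (g.1.queue l).tail else g.1.queue l
            | none => g.1.queue l) ++ [h.choose]
        else
          (match (g.1.queue l).head? with
            | some i => if P i (g.2 i) = Act.go then (g.1.queue l).tail else g.1.queue l
            | none => g.1.queue l),
      g.1.done ∪ {i | isFront g.1 i ∧ P i (g.2 i) = Act.go}⟩ := rfl

lemma q1_subset (E : IEP kin kout Mem Extra Msg) (P : Prot kin kout Mem Extra)
    (g : GState kin kout Mem Extra) (l : Fin kin) :
    (match (g.1.queue l).head? with
      | some i => if P i (g.2 i) = Act.go then (g.1.queue l).tail else g.1.queue l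
      | none => g.1.queue l) ⊆ g.1.queue l := by
  split
  · split
    · exact List.tail_subset _
    · exact fun _ h => h
  · exact fun _ h => h

lemma mem_step_queue {E : IEP kin kout Mem Extra Msg} {P : Prot kin kout Mem Extra}
    {g : GState kin kout Mem Extra} {l : Fin kin} {x : ℕ}
    (hx : x ∈ (step E P g).1.queue l) :
    x ∈ g.1.queue l ∨ ∃ l', g.1.adv.arrive x = (g.1.time + 1, l, l') := by
  rw [step_env] at hx
  dsimp only at hx
  split at hx
  case isTrue h =>
    rcases List.mem_append.mp hx with h1 | h1
    · exact Or.inl (q1_subset E P g l h1)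
    · simp at h1
      subst h1
      exact Or.inr h.choose_spec
  case isFalse h =>
    exact Or.inl (q1_subset E P g l hx)

lemma inv_step (E : IEP kin kout Mem Extra Msg) (P : Prot kin kout Mem Extra)
    (g : GState kin kout Mem Extra) (hInv : Inv g.1) : Inv (step E P g).1 := by
  obtain ⟨hnd, hcross, harr⟩ := hInv
  have hnew : ∀ (l : Fin kin) (h : ∃ i l', g.1.adv.arrive i = (g.1.time + 1, l, l')),
      g.1.adv.arrive h.choose = (g.1.time + 1, l, (g.1.adv.arrive h.choose).2.2) := by
    intro l h
    obtain ⟨l', hl'⟩ := h.choose_spec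
    rw [hl']
  have hnotold : ∀ (l l2 : Fin kin) (h : ∃ i l', g.1.adv.arrive i = (g.1.time + 1, l, l')),
      h.choose ∉ g.1.queue l2 := by
    intro l l2 h hmem
    have h1 := (harr _ _ hmem).2.1
    have h2 := hnew l h
    rw [h2] at h1
    simp at h1
  refine ⟨?_, ?_, ?_⟩
  · intro l
    rw [step_env]
    dsimp only
    have hq1 : (match (g.1.queue l).head? with
      | some i => if P i (g.2 i) = Act.go then (g.1.queue l).tail else g.1.queue l
      | none => g.1.queue l).Nodup := by
      split
      · split
        · exact (hnd l).sublist (List.tail_sublist _)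
        · exact hnd l
      · exact hnd l
    split
    case isTrue h =>
      refine List.Nodup.append hq1 (List.nodup_singleton _) ?_
      intro x hx1 hx2
      simp at hx2
      subst hx2
      exact hnotold l l h (q1_subset E P g l hx1)
    case isFalse h => exact hq1
  · intro i l l' h1 h2
    rcases mem_step_queue h1 with ha | ⟨w, ha⟩ <;>
      rcases mem_step_queue h2 with hb | ⟨w', hb⟩
    · exact hcross i l l' ha hb
    · exact absurd ((harr _ _ ha).2.1) (by rw [hb]; simp)
    · exact absurd ((harr _ _ hb).2.1) (by rw [ha]; simp)
    · have := ha.symm.trans hb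
      exact Fin.ext (congrArg (fun p => p.2.1.val) this)
  · intro i l hmem
    rw [step_env]
    rcases mem_step_queue hmem with ha | ⟨w, ha⟩
    · obtain ⟨u1, u2, u3⟩ := harr _ _ ha
      exact ⟨u1, by dsimp only; omega, u3⟩
    · rw [ha]
      exact ⟨rfl, le_refl _, by dsimp only; omega⟩

lemma front_lane_unique {e : EnvState kin kout} (hInv : Inv e) {i : ℕ} {l l' : Fin kin}
    (h : (e.queue l).head? = some i) (h' : (e.queue l').head? = some i) : l = l' :=
  hInv.2.1 i l l' (head?_mem h) (head?_mem h')

lemma front_persist {E : IEP kin kout Mem Extra Msg} {P : Prot kin kout Mem Extra}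
    {g : GState kin kout Mem Extra} {i : ℕ} {l : Fin kin}
    (h : (g.1.queue l).head? = some i) (hact : P i (g.2 i) ≠ Act.go) :
    (((step E P g).1).queue l).head? = some i := by
  rw [step_env]
  dsimp only
  have hq1 : (match (g.1.queue l).head? with
    | some i => if P i (g.2 i) = Act.go then (g.1.queue l).tail else g.1.queue l
    | none => g.1.queue l) = g.1.queue l := by
    rw [h]; dsimp only; exact if_neg hact
  rw [hq1]
  split
  · rw [head?_cons h]
    simp
  · exact h

lemma front_go_gone {E : IEP kin kout Mem Extra Msg} {P : Prot kin kout Mem Extra}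
    {g : GState kin kout Mem Extra} (hInv : Inv g.1) {i : ℕ} {l : Fin kin}
    (h : (g.1.queue l).head? = some i) (hact : P i (g.2 i) = Act.go)
    (l2 : Fin kin) : i ∉ ((step E P g).1).queue l2 := by
  intro hmem
  rcases mem_step_queue hmem with ha | ⟨w, ha⟩
  · -- i is in the old queue l2
    have hl2 : l2 = l := hInv.2.1 i l2 l ha (head?_mem h)
    subst hl2
    -- compute the new queue at l2
    rw [step_env] at hmem
    dsimp only at hmem
    have hq1 : (match (g.1.queue l2).head? with
      | some j => if P j (g.2 j) = Act.go then (g.1.queue l2).tail else g.1.queue l2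
      | none => g.1.queue l2) = (g.1.queue l2).tail := by
      rw [h]; dsimp only; exact if_pos hact
    rw [hq1] at hmem
    have hnd := hInv.1 l2
    rw [head?_cons h] at hnd
    have hnotin : i ∉ (g.1.queue l2).tail := by
      simp at hnd
      exact hnd.1
    split at hmem
    case isTrue hh =>
      rcases List.mem_append.mp hmem with h1 | h1
      · exact hnotin h1
      · simp at h1
        obtain ⟨w', hw⟩ := hh.choose_spec
        have h2 := (hInv.2.2 i l2 (head?_mem h)).2.1
        rw [h1, hw] at h2
        simp at h2
    case isFalse hh => exact hnotin hmem
  · have := (hInv.2.2 i l (head?_mem h)).2.1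
    rw [ha] at this
    simp at this

end RunLemmas
section ReadingLemmas

variable {kin kout : ℕ}

lemma posAt_front {e : EnvState kin kout} (hInv : Inv e) {i : ℕ} {l : Fin kin}
    (h : (e.queue l).head? = some i) : posAt e i = some (l, 0) := by
  have hmem : i ∈ e.queue l := head?_mem h
  have hex : ∃ l, i ∈ e.queue l := ⟨l, hmem⟩
  unfold posAt
  rw [dif_pos hex]
  have hch : hex.choose = l := hInv.2.1 i _ _ hex.choose_spec hmem
  rw [hch]
  have : (e.queue l).idxOf i = 0 := by
    rw [head?_cons h]
    exact List.idxOf_cons_self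
  rw [this]

lemma reading_front {e : EnvState kin kout} (i : ℕ) :
    (minimalReading e i).front = isFront e i := rfl

lemma reading_intent {e : EnvState kin kout} (i : ℕ) :
    (minimalReading e i).intent = intentOf e i := rfl

lemma reading_lane {e : EnvState kin kout} (hInv : Inv e) {i : ℕ} {l : Fin kin}
    (hmem : i ∈ e.queue l) : (minimalReading e i).lane = LaneStatus.inLane l := by
  have hex : ∃ l, i ∈ e.queue l := ⟨l, hmem⟩
  unfold minimalReading
  dsimp only
  rw [dif_pos hex]
  have hch : hex.choose = l := hInv.2.1 i _ _ hex.choose_spec hmem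
  rw [hch]

lemma moveAt_front {e : EnvState kin kout} (hInv : Inv e) {i : ℕ} {l : Fin kin}
    (h : (e.queue l).head? = some i) : moveAt e i = some (l, intentOf e i) := by
  unfold moveAt
  rw [posAt_front hInv h]
  rfl

end ReadingLemmas

section RunLevel

variable {kin kout : ℕ} {F : Set (Adversary kin kout)}
  {Q : Prot kin kout (Set (Move kin kout)) ℕ}
  {r : Run kin kout (Set (Move kin kout)) ℕ}

lemma run_succ (hr : r ∈ Runs (gammaIntent kin kout F) Q) (m : ℕ) :
    r (m + 1) = step (Eintent kin kout) Q (r m) := hr.2 m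

lemma run_adv (hr : r ∈ Runs (gammaIntent kin kout F) Q) (m : ℕ) :
    (r m).1.adv = (r 0).1.adv := by
  induction m with
  | zero => rfl
  | succ n ih => rw [run_succ hr n, step_env]; exact ih

lemma run_time (hr : r ∈ Runs (gammaIntent kin kout F) Q) (m : ℕ) :
    (r m).1.time = m := by
  induction m with
  | zero => exact hr.1.2.1
  | succ n ih => rw [run_succ hr n, step_env]; simp [ih]

lemma run_inv (hr : r ∈ Runs (gammaIntent kin kout F) Q) (m : ℕ) :
    Inv (r m).1 := by
  induction m with
  | zero =>
    have hq := hr.1.2.2.1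
    exact ⟨fun l => by rw [hq l]; exact List.nodup_nil,
      fun i l l' h1 h2 => by rw [hq l] at h1; simp at h1,
      fun i l h1 => by rw [hq l] at h1; simp at h1⟩
  | succ n ih => rw [run_succ hr n]; exact inv_step _ _ _ ih

lemma run_sens (hr : r ∈ Runs (gammaIntent kin kout F) Q) (m : ℕ) (i : ℕ) :
    ((r m).2 i).2 = (minimalReading (r m).1 i, m) := by
  cases m with
  | zero =>
    rw [hr.1.2.2.2.2 i]
    have ht : (r 0).1.time = 0 := hr.1.2.1
    show (minimalReading (r 0).1 i, (Eintent kin kout).extra (r 0).1 i) = _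
    rw [show (Eintent kin kout).extra (r 0).1 i = (r 0).1.time from rfl, ht]
  | succ n =>
    rw [run_succ hr n]
    show ((minimalReading (step (Eintent kin kout) Q (r n)).1 i,
      (step (Eintent kin kout) Q (r n)).1.time)) = _
    rw [← run_succ hr n, run_time hr (n + 1)]

lemma frontAt_ex (h : frontAt r m i) : ∃ l : Fin kin, ((r m).1.queue l).head? = some i := h

lemma going_iff (hr : r ∈ Runs (gammaIntent kin kout F) Q) {m i : ℕ}
    (hf : frontAt r m i) :
    goingAt r m i ↔ Q i ((r m).2 i) = Act.go := by
  obtain ⟨l, hl⟩ := hf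
  constructor
  · intro hg
    by_contra hact
    apply hg.2
    refine ⟨l, ?_⟩
    rw [run_succ hr m]
    exact front_persist hl hact
  · intro hact
    refine ⟨⟨l, hl⟩, ?_⟩
    rintro ⟨l', hl'⟩
    have := front_go_gone (E := Eintent kin kout) (run_inv hr m) hl hact l'
    rw [← run_succ hr m] at this
    exact this (head?_mem hl')

lemma GOs_zero (hr : r ∈ Runs (gammaIntent kin kout F) Q) : GOs r 0 = ∅ := by
  ext i
  simp only [GOs, Set.mem_setOf_eq, Set.mem_empty_iff_false, iff_false]
  rintro ⟨⟨l, hl⟩, -⟩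
  rw [hr.1.2.2.1 l] at hl
  simp at hl

/-- An agent at the front which does not go remains at the front. -/
lemma front_stay (hr : r ∈ Runs (gammaIntent kin kout F) Q) {m i : ℕ} {l : Fin kin}
    (hl : ((r m).1.queue l).head? = some i) (hng : ¬ goingAt r m i) :
    ((r (m + 1)).1.queue l).head? = some i := by
  have hact : Q i ((r m).2 i) ≠ Act.go := by
    intro h
    exact hng ((going_iff hr ⟨l, hl⟩).mpr h)
  rw [run_succ hr m]
  exact front_persist hl hact

end RunLevel
section Memory

variable {kin kout : ℕ}

/-- The set of messages received by every front agent in a round: the moves of the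
front agents whose transmission succeeded. -/
def FrontMsgs (e : EnvState kin kout) (k : ℕ) : Set (Move kin kout) :=
  {mv | ∃ (j : ℕ) (l : Fin kin), (e.queue l).head? = some j ∧ e.adv.Ft k j = true ∧
        mv = (l, intentOf e j)}

lemma FrontMsgs_unique {e : EnvState kin kout} {k : ℕ} {l : Fin kin} {w w' : Fin kout}
    (h : (l, w) ∈ FrontMsgs e k) (h' : (l, w') ∈ FrontMsgs e k) : w = w' := by
  obtain ⟨j, l1, hl1, -, he⟩ := h
  obtain ⟨j', l1', hl1', -, he'⟩ := h'
  rw [Prod.mk.injEq] at he he'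
  obtain ⟨e1, e2⟩ := he
  obtain ⟨e1', e2'⟩ := he'
  subst e1
  have hj : j = j' := by
    rw [← e1'] at hl1'
    rw [hl1] at hl1'
    exact Option.some_injective _ hl1'
  subst hj
  rw [e2, e2']

/-- The received-message set in `step`, in closed form. -/
def RcvSet (E : IEP kin kout Mem Extra Msg) (P : Prot kin kout Mem Extra)
    (g : GState kin kout Mem Extra) (i : ℕ) : Set Msg :=
  if g.1.adv.Fr g.1.time i = true ∧ (posAt (step E P g).1 i).isSome = true then
    {m | ∃ j pj pi,
          E.msg j (g.2 j) (P j (g.2 j))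
            (minimalReading (step E P g).1 j, E.extra (step E P g).1 j) = some m ∧
          g.1.adv.Ft g.1.time j = true ∧
          posAt (step E P g).1 j = some pj ∧ posAt (step E P g).1 i = some pi ∧
          (pj, pi) ∈ g.1.adv.T}
  else ∅

lemma step_local (E : IEP kin kout Mem Extra Msg) (P : Prot kin kout Mem Extra)
    (g : GState kin kout Mem Extra) (i : ℕ) :
    (step E P g).2 i =
      (E.upd i (g.2 i) (P i (g.2 i)) (RcvSet E P g i),
       minimalReading (step E P g).1 i, E.extra (step E P g).1 i) := rfl

variable {F : Set (Adversary kin kout)}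
  {Q : Prot kin kout (Set (Move kin kout)) ℕ}
  {r : Run kin kout (Set (Move kin kout)) ℕ}

/-- Memory characterization: the memory of a front agent after round `m+1` is exactly
the set of moves of front agents whose transmission succeeded. -/
lemma run_mem (hr : r ∈ Runs (gammaIntent kin kout F) Q)
    (hFr : ∀ k i, (r 0).1.adv.Fr k i = true) {m i : ℕ}
    (hf : frontAt r (m + 1) i) :
    ((r (m + 1)).2 i).1 = FrontMsgs (r (m + 1)).1 m := by
  obtain ⟨li, hli⟩ := hf
  have hInv' : Inv (r (m + 1)).1 := run_inv hr (m + 1)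
  have hstep := run_succ hr m
  have h1 : ((r (m + 1)).2 i).1 = RcvSet (Eintent kin kout) Q (r m) i := by
    rw [hstep]; rfl
  rw [h1]
  unfold RcvSet
  rw [← hstep]
  have hcond : (r m).1.adv.Fr (r m).1.time i = true ∧
      (posAt (r (m + 1)).1 i).isSome = true := by
    refine ⟨by rw [run_adv hr m]; exact hFr _ _, ?_⟩
    rw [posAt_front hInv' hli]; rfl
  rw [if_pos hcond]
  have hadv : (r (m + 1)).1.adv = (r m).1.adv := by
    rw [run_adv hr (m + 1), run_adv hr m]
  have htime : (r m).1.time = m := run_time hr m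
  ext mv
  constructor
  · rintro ⟨j, pj, pi2, hmsg, hFt, hpj, hpi, hT⟩
    by_cases hfj : isFront (r (m + 1)).1 j
    · obtain ⟨lj, hlj⟩ := hfj
      refine ⟨j, lj, hlj, ?_, ?_⟩
      · rw [hadv]; rw [htime] at hFt; exact hFt
      · have hmsg2 : (Eintent kin kout).msg j ((r m).2 j) (Q j ((r m).2 j))
            (minimalReading (r (m + 1)).1 j, (Eintent kin kout).extra (r (m + 1)).1 j)
            = some (lj, intentOf (r (m + 1)).1 j) := by
          show (if (minimalReading (r (m + 1)).1 j).front then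
            match (minimalReading (r (m + 1)).1 j).lane with
            | LaneStatus.inLane l => some (l, (minimalReading (r (m + 1)).1 j).intent)
            | _ => none
          else none) = _
          rw [reading_front, if_pos (show isFront (r (m + 1)).1 j from ⟨lj, hlj⟩),
            reading_lane hInv' (head?_mem hlj)]
          rfl
        rw [hmsg2] at hmsg
        exact (Option.some_injective _ hmsg).symm
    · exfalso
      have hmsg2 : (Eintent kin kout).msg j ((r m).2 j) (Q j ((r m).2 j))
          (minimalReading (r (m + 1)).1 j, (Eintent kin kout).extra (r (m + 1)).1 j)
          = none := by
        show (if (minimalReading (r (m + 1)).1 j).front then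
          match (minimalReading (r (m + 1)).1 j).lane with
          | LaneStatus.inLane l => some (l, (minimalReading (r (m + 1)).1 j).intent)
          | _ => none
        else none) = none
        rw [reading_front]
        exact if_neg hfj
      rw [hmsg2] at hmsg
      cases hmsg
  · rintro ⟨j, lj, hlj, hFt, rfl⟩
    refine ⟨j, (lj, 0), (li, 0), ?_, ?_, posAt_front hInv' hlj, posAt_front hInv' hli, ?_⟩
    · show (if (minimalReading (r (m + 1)).1 j).front then
        match (minimalReading (r (m + 1)).1 j).lane with
        | LaneStatus.inLane l => some (l, (minimalReading (r (m + 1)).1 j).intent)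
        | _ => none
      else none) = _
      rw [reading_front, if_pos (show isFront (r (m + 1)).1 j from ⟨lj, hlj⟩),
        reading_lane hInv' (head?_mem hlj)]
      rfl
    · rw [htime, ← hadv]; exact hFt
    · rw [← hadv]
      exact (r (m + 1)).1.adv.T_front lj li

end Memory

section PintentEval

variable {kin kout : ℕ}

lemma Pintent_eval (hkin : 0 < kin) (O : Move kin kout → Move kin kout → Prop)
    (i : ℕ) (M : Set (Move kin kout)) {R : Reading kin kout} {l : Fin kin}
    (hlane : R.lane = LaneStatus.inLane l) (hfront : R.front) (t : ℕ) :
    Pintent hkin O i (M, R, t) = Act.go ↔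
      compatAll O (PosSet hkin O M (nextL hkin t) l) (l, R.intent) := by
  show (match (M, R, t).2.1.lane with
    | LaneStatus.inLane l =>
        if (M, R, t).2.1.front ∧
            compatAll O (PosSet hkin O (M, R, t).1 (nextL hkin (M, R, t).2.2) l)
              (l, (M, R, t).2.1.intent)
        then Act.go else Act.noop
    | _ => Act.noop) = Act.go ↔ _
  dsimp only
  rw [hlane]
  show (if R.front ∧ compatAll O (PosSet hkin O M (nextL hkin t) l) (l, R.intent)
    then Act.go else Act.noop) = Act.go ↔ _
  by_cases hc : compatAll O (PosSet hkin O M (nextL hkin t) l) (l, R.intent)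
  · rw [if_pos ⟨hfront, hc⟩]
    simp [hc]
  · rw [if_neg (fun h => hc h.2)]
    simp [hc]

variable {F : Set (Adversary kin kout)} {r : Run kin kout (Set (Move kin kout)) ℕ}

/-- Evaluate an arbitrary protocol's local state in a run as a triple. -/
lemma run_state_eq {Q : Prot kin kout (Set (Move kin kout)) ℕ}
    (hr : r ∈ Runs (gammaIntent kin kout F) Q) (m i : ℕ) :
    (r m).2 i = (((r m).2 i).1, minimalReading (r m).1 i, m) := by
  have h : (r m).2 i = (((r m).2 i).1, ((r m).2 i).2) := rfl
  rw [h, run_sens hr m i]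

end PintentEval
section SafetyLiveness

variable {kin kout : ℕ} {F : Set (Adversary kin kout)}

lemma validity_P (hkin : 0 < kin) (O : Move kin kout → Move kin kout → Prop) :
    ValidityP (gammaIntent kin kout F) (Pintent hkin O) :=
  fun _ _ _ _ hg => hg.1

lemma safety_core (hkin : 0 < kin) {O : Move kin kout → Move kin kout → Prop}
    {r : Run kin kout (Set (Move kin kout)) ℕ}
    (hr : r ∈ Runs (gammaIntent kin kout F) (Pintent hkin O))
    (hFr : ∀ k i, (r 0).1.adv.Fr k i = true)
    {n i j : ℕ} {li lj : Fin kin}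
    (hli : ((r (n + 1)).1.queue li).head? = some i)
    (hlj : ((r (n + 1)).1.queue lj).head? = some j)
    (hgi : goingAt r (n + 1) i) (hgj : goingAt r (n + 1) j)
    (hlt : distC (nextL hkin (n + 1)) lj < distC (nextL hkin (n + 1)) li) :
    O (li, intentOf (r (n + 1)).1 i) (lj, intentOf (r (n + 1)).1 j) := by
  have hInv := run_inv hr (n + 1)
  have hMi := run_mem hr hFr (⟨li, hli⟩ : frontAt r (n + 1) i)
  have hMj := run_mem hr hFr (⟨lj, hlj⟩ : frontAt r (n + 1) j)
  have hacti := (going_iff hr ⟨li, hli⟩).mp hgi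
  have hactj := (going_iff hr ⟨lj, hlj⟩).mp hgj
  rw [run_state_eq hr (n + 1) i] at hacti
  rw [run_state_eq hr (n + 1) j] at hactj
  have hci := (Pintent_eval hkin O i _ (reading_lane hInv (head?_mem hli))
    (show isFront (r (n + 1)).1 i from ⟨li, hli⟩) (n + 1)).mp hacti
  have hcj := (Pintent_eval hkin O j _ (reading_lane hInv (head?_mem hlj))
    (show isFront (r (n + 1)).1 j from ⟨lj, hlj⟩) (n + 1)).mp hactj
  rw [hMi] at hci
  rw [hMj] at hcj
  set e := (r (n + 1)).1
  set nxt := nextL hkin (n + 1)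
  set M := FrontMsgs e n with hM
  have hint : (lj, intentOf e j) ∈ M ∨ ¬∃ w, ((lj, intentOf e j).1, w) ∈ M := by
    by_cases hFt : e.adv.Ft n j = true
    · exact Or.inl ⟨j, lj, hlj, hFt, rfl⟩
    · refine Or.inr ?_
      rintro ⟨w, j', lj', hlj', hFt', hw⟩
      have he1 : lj' = lj := (congrArg Prod.fst hw).symm
      subst he1
      have hj : j' = j := Option.some_injective _ (hlj'.symm.trans hlj)
      rw [hj] at hFt'
      exact hFt hFt'
  have hd : distC nxt (lj, intentOf e j).1 = distC nxt lj := rfl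
  have hmem1 : (lj, intentOf e j) ∈ posStage hkin O M nxt (distC nxt lj + 1) := by
    have := posStage_insert hkin O M nxt (mv := (lj, intentOf e j)) ?_ hint
    · rw [hd] at this; exact this
    · rw [hd]; exact hcj
  have hmem2 : (lj, intentOf e j) ∈ posStage hkin O M nxt (distC nxt li) :=
    posStage_mono hkin O M nxt (by omega) hmem1
  exact hci _ hmem2

lemma safety_P (hkin : 0 < kin) (O : Move kin kout → Move kin kout → Prop)
    (hO : ∀ a b, O a b → O b a)
    (hFrF : ∀ α ∈ F, ∀ k i, α.Fr k i = true) :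
    SafetyP O (gammaIntent kin kout F) (Pintent hkin O) := by
  intro r hr m i j hij hgi hgj mi mj hmi hmj
  have hFr : ∀ k i, (r 0).1.adv.Fr k i = true := hFrF _ hr.1.1
  cases m with
  | zero =>
    exfalso
    obtain ⟨l, hl⟩ := hgi.1
    rw [hr.1.2.2.1 l] at hl
    simp at hl
  | succ n =>
    obtain ⟨li, hli⟩ := hgi.1
    obtain ⟨lj, hlj⟩ := hgj.1
    have hInv := run_inv hr (n + 1)
    have hmi' : mi = (li, intentOf (r (n + 1)).1 i) := by
      rw [moveAt_front hInv hli] at hmi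
      exact (Option.some_injective _ hmi).symm
    have hmj' : mj = (lj, intentOf (r (n + 1)).1 j) := by
      rw [moveAt_front hInv hlj] at hmj
      exact (Option.some_injective _ hmj).symm
    have hne : distC (nextL hkin (n + 1)) lj ≠ distC (nextL hkin (n + 1)) li := by
      intro h
      have : lj = li := distC_inj _ h
      subst this
      exact hij (Option.some_injective _ (hli.symm.trans hlj))
    subst hmi'; subst hmj'
    rcases Nat.lt_or_ge (distC (nextL hkin (n + 1)) lj) (distC (nextL hkin (n + 1)) li)
      with h | h
    · exact safety_core hkin hr hFr hli hlj hgi hgj h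
    · have h' : distC (nextL hkin (n + 1)) li < distC (nextL hkin (n + 1)) lj := by omega
      exact hO _ _ (safety_core hkin hr hFr hlj hli hgj hgi h')

lemma liveness_P (hkin : 0 < kin) (O : Move kin kout → Move kin kout → Prop) :
    LivenessP (gammaIntent kin kout F) (Pintent hkin O) := by
  intro r hr m i hf
  obtain ⟨l, hl⟩ := hf
  by_contra hno
  push_neg at hno
  have hno' : ∀ m' ≥ m, ¬ goingAt r m' i := by
    intro m' hm' hg
    exact absurd hg (hno m' hm')
  have hpers : ∀ t, ((r (m + t)).1.queue l).head? = some i := by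
    intro t
    induction t with
    | zero => exact hl
    | succ s ih =>
      have h2 := front_stay hr ih (hno' (m + s) (by omega))
      have h3 : m + (s + 1) = (m + s) + 1 := by omega
      rw [h3]
      exact h2
  set d := distC (⟨m % kin, Nat.mod_lt _ hkin⟩ : Fin kin) l with hdm
  have hT : (m + d) % kin = l.val := by
    have h1 : (m + d) % kin = (m % kin + d) % kin := by
      rw [Nat.add_mod, Nat.mod_eq_of_lt (distC_lt hkin _ _)]
    rw [h1]
    exact distC_recover (⟨m % kin, Nat.mod_lt _ hkin⟩ : Fin kin) l
  have hfrT : frontAt r (m + d) i := ⟨l, hpers d⟩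
  have hnext : nextL hkin (m + d) = l := Fin.ext hT
  have hact : Pintent hkin O i ((r (m + d)).2 i) = Act.go := by
    rw [run_state_eq hr (m + d) i]
    rw [Pintent_eval hkin O i _ (reading_lane (run_inv hr (m + d)) (head?_mem (hpers d)))
      hfrT (m + d), hnext]
    unfold PosSet
    rw [distC_self]
    exact fun mv h => absurd h (Set.notMem_empty mv)
  exact hno' (m + d) (by omega) ((going_iff hr hfrT).mpr hact)

end SafetyLiveness
section Determinism

variable {kin kout : ℕ} {F : Set (Adversary kin kout)}

lemma Eintent_msg (j : ℕ) (s : LState kin kout (Set (Move kin kout)) ℕ) (a : Act)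
    (o : Reading kin kout × ℕ) :
    (Eintent kin kout).msg j s a o =
      (if o.1.front then
        match o.1.lane with
        | LaneStatus.inLane l => some (l, o.1.intent)
        | _ => none
      else none) := rfl

lemma Eintent_upd (i : ℕ) (s : LState kin kout (Set (Move kin kout)) ℕ) (a : Act)
    (B : Set (Move kin kout)) : (Eintent kin kout).upd i s a B = B := rfl

lemma step_congr {Q Q' : Prot kin kout (Set (Move kin kout)) ℕ}
    (g : GState kin kout (Set (Move kin kout)) ℕ)
    (hact : ∀ (l : Fin kin) i, (g.1.queue l).head? = some i →
      (Q i (g.2 i) = Act.go ↔ Q' i (g.2 i) = Act.go)) :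
    step (Eintent kin kout) Q g = step (Eintent kin kout) Q' g := by
  have hm : ∀ l : Fin kin, (match (g.1.queue l).head? with
      | some i => if Q i (g.2 i) = Act.go then (g.1.queue l).tail else g.1.queue l
      | none => g.1.queue l) =
      (match (g.1.queue l).head? with
      | some i => if Q' i (g.2 i) = Act.go then (g.1.queue l).tail else g.1.queue l
      | none => g.1.queue l) := by
    intro l
    cases hh : (g.1.queue l).head? with
    | none => rfl
    | some i =>
      dsimp only
      by_cases ha : Q i (g.2 i) = Act.go
      · rw [if_pos ha, if_pos ((hact l i hh).mp ha)]
      · rw [if_neg ha, if_neg (fun h => ha ((hact l i hh).mpr h))]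
  have hdone : {i | isFront g.1 i ∧ Q i (g.2 i) = Act.go} =
      {i | isFront g.1 i ∧ Q' i (g.2 i) = Act.go} := by
    ext x
    simp only [Set.mem_setOf_eq]
    constructor
    · rintro ⟨⟨l, hl⟩, ha⟩
      exact ⟨⟨l, hl⟩, (hact l x hl).mp ha⟩
    · rintro ⟨⟨l, hl⟩, ha⟩
      exact ⟨⟨l, hl⟩, (hact l x hl).mpr ha⟩
  have henv : (step (Eintent kin kout) Q g).1 = (step (Eintent kin kout) Q' g).1 := by
    rw [step_env, step_env]
    congr 1
    · funext l
      rw [hm l]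
    · rw [hdone]
  have hloc : ∀ i, (step (Eintent kin kout) Q g).2 i = (step (Eintent kin kout) Q' g).2 i := by
    intro i
    rw [step_local, step_local]
    have hrcv : RcvSet (Eintent kin kout) Q g i = RcvSet (Eintent kin kout) Q' g i := by
      unfold RcvSet
      rw [henv]
      simp only [Eintent_msg]
    rw [hrcv, henv]
    simp only [Eintent_upd]
  exact Prod.ext_iff.mpr ⟨henv, funext hloc⟩

lemma runs_eq {Q Q' : Prot kin kout (Set (Move kin kout)) ℕ}
    {r r' : Run kin kout (Set (Move kin kout)) ℕ}
    (hr : r ∈ Runs (gammaIntent kin kout F) Q)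
    (hr' : r' ∈ Runs (gammaIntent kin kout F) Q') (h0 : r 0 = r' 0) {m : ℕ}
    (hGO : ∀ k < m, GOs r k = GOs r' k) : ∀ k ≤ m, r k = r' k := by
  intro k hk
  induction k with
  | zero => exact h0
  | succ s ih =>
    have hs := ih (by omega)
    rw [run_succ hr s, run_succ hr' s, ← hs]
    apply step_congr
    intro l i hl
    have hfi : frontAt r s i := ⟨l, hl⟩
    have hfi' : frontAt r' s i := ⟨l, by rw [← hs]; exact hl⟩
    rw [← going_iff hr hfi]
    have h2 : Q' i ((r s).2 i) = Act.go ↔ goingAt r' s i := by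
      rw [hs]
      exact (going_iff hr' hfi').symm
    rw [h2]
    exact Set.ext_iff.mp (hGO s (by omega)) i

/-- Canonical initial state for an adversary. -/
def initState (A : Adversary kin kout) : GState kin kout (Set (Move kin kout)) ℕ :=
  (⟨A, 0, fun _ => [], ∅⟩,
   fun i => (∅, minimalReading ⟨A, 0, fun _ => [], ∅⟩ i, 0))

/-- The canonical run of a protocol against an adversary. -/
def runOf (Q : Prot kin kout (Set (Move kin kout)) ℕ) (A : Adversary kin kout) :
    Run kin kout (Set (Move kin kout)) ℕ
  | 0 => initState A
  | m + 1 => step (Eintent kin kout) Q (runOf Q A m)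

lemma runOf_mem (Q : Prot kin kout (Set (Move kin kout)) ℕ) {A : Adversary kin kout}
    (hA : A ∈ F) : runOf Q A ∈ Runs (gammaIntent kin kout F) Q :=
  ⟨⟨hA, rfl, fun _ => rfl, rfl, fun _ => rfl⟩, fun _ => rfl⟩

end Determinism
section Beta

variable {kin kout : ℕ}

/-- Designated lanes of the β-construction. -/
def Dl (M : Set (Move kin kout)) (li l lam : Fin kin) : Prop :=
  lam = li ∨ lam = l ∨ ∃ w, (lam, w) ∈ M

/-- Intents of the designated front agents. -/
noncomputable def Wl (M : Set (Move kin kout)) (li l : Fin kin) (inti y : Fin kout)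
    (lam : Fin kin) : Fin kout :=
  if lam = li then inti else if lam = l then y
  else if h : ∃ w, (lam, w) ∈ M then h.choose else y

/-- Agent ids of the designated front agents. -/
def fl (li : Fin kin) (i : ℕ) (lam : Fin kin) : ℕ :=
  if lam = li then i else i + 1 + lam.val

lemma fl_inj (li : Fin kin) (i : ℕ) : Function.Injective (fl li i) := by
  intro a b hab
  unfold fl at hab
  by_cases ha : a = li <;> by_cases hb : b = li
  · rw [ha, hb]
  · rw [if_pos ha, if_neg hb] at hab; omega
  · rw [if_neg ha, if_pos hb] at hab; omega
  · rw [if_neg ha, if_neg hb] at hab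
    exact Fin.ext (by omega)

/-- The arrival schedule of the β-adversary. -/
noncomputable def betaArr (M : Set (Move kin kout)) (li l : Fin kin) (i : ℕ)
    (inti y : Fin kout) (m0 : ℕ) : ℕ → ℕ × Fin kin × Fin kout := fun x =>
  if h : ∃ lam : Fin kin, Dl M li l lam ∧ fl li i lam = x then
    (m0, h.choose, Wl M li l inti y h.choose)
  else (m0 + 1 + x, l, y)

variable {M : Set (Move kin kout)} {li l : Fin kin} {i : ℕ} {inti y : Fin kout} {m0 : ℕ}

lemma betaArr_des {lam : Fin kin} (hD : Dl M li l lam) :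
    betaArr M li l i inti y m0 (fl li i lam) = (m0, lam, Wl M li l inti y lam) := by
  unfold betaArr
  have h : ∃ lam', Dl M li l lam' ∧ fl li i lam' = fl li i lam := ⟨lam, hD, rfl⟩
  rw [dif_pos h]
  have hch : h.choose = lam := fl_inj li i h.choose_spec.2
  rw [hch]

lemma betaArr_inv {x : ℕ} {lam : Fin kin} {w : Fin kout}
    (hx : betaArr M li l i inti y m0 x = (m0, lam, w)) :
    x = fl li i lam ∧ Dl M li l lam ∧ w = Wl M li l inti y lam := by
  unfold betaArr at hx
  split at hx
  case isTrue h =>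
    obtain ⟨hD, hfl⟩ := h.choose_spec
    rw [Prod.mk.injEq, Prod.mk.injEq] at hx
    obtain ⟨-, hlam, hw⟩ := hx
    subst hlam
    exact ⟨hfl.symm, hD, hw.symm⟩
  case isFalse h =>
    exfalso
    have := congrArg Prod.fst hx
    simp at this
    omega

lemma betaArr_time (x : ℕ) :
    (betaArr M li l i inti y m0 x).1 = m0 ∨
    (betaArr M li l i inti y m0 x).1 = m0 + 1 + x := by
  unfold betaArr
  split
  · exact Or.inl rfl
  · exact Or.inr rfl

lemma betaCF : ∀ a b : ℕ, a ≠ b →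
    (betaArr M li l i inti y m0 a).1 = (betaArr M li l i inti y m0 b).1 →
    (betaArr M li l i inti y m0 a).2.1 ≠ (betaArr M li l i inti y m0 b).2.1 := by
  intro a b hab htime
  unfold betaArr at htime ⊢
  by_cases h1 : ∃ lam : Fin kin, Dl M li l lam ∧ fl li i lam = a <;>
    by_cases h2 : ∃ lam : Fin kin, Dl M li l lam ∧ fl li i lam = b
  · rw [dif_pos h1, dif_pos h2] at htime ⊢
    intro heq
    dsimp only at heq
    apply hab
    rw [← h1.choose_spec.2, ← h2.choose_spec.2, heq]
  · rw [dif_pos h1, dif_neg h2] at htime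
    dsimp only at htime
    omega
  · rw [dif_neg h1, dif_pos h2] at htime
    dsimp only at htime
    omega
  · rw [dif_neg h1, dif_neg h2] at htime
    dsimp only at htime
    omega

/-- The β-adversary. -/
noncomputable def betaAdv (M : Set (Move kin kout)) (li l : Fin kin) (i : ℕ)
    (inti y : Fin kout) (m0 : ℕ) (Ftc : ℕ → Bool) : Adversary kin kout where
  arrive := betaArr M li l i inti y m0
  conflictFree := betaCF
  T := Set.univ
  T_front := fun _ _ => Set.mem_univ _
  Ft := fun _ x => Ftc x
  Fr := fun _ _ => true

lemma runOf_adv (Q : Prot kin kout (Set (Move kin kout)) ℕ) (A : Adversary kin kout)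
    (k : ℕ) : (runOf Q A k).1.adv = A := by
  induction k with
  | zero => rfl
  | succ s ih =>
    show (step (Eintent kin kout) Q (runOf Q A s)).1.adv = A
    rw [step_env]
    exact ih

lemma runOf_time (Q : Prot kin kout (Set (Move kin kout)) ℕ) (A : Adversary kin kout)
    (k : ℕ) : (runOf Q A k).1.time = k := by
  induction k with
  | zero => rfl
  | succ s ih =>
    show (step (Eintent kin kout) Q (runOf Q A s)).1.time = s + 1
    rw [step_env]
    simp [ih]

lemma beta_queue (Q : Prot kin kout (Set (Move kin kout)) ℕ) (Ftc : ℕ → Bool)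
    (hm0 : 1 ≤ m0) :
    ∀ k ≤ m0, ∀ lam : Fin kin,
      (runOf Q (betaAdv M li l i inti y m0 Ftc) k).1.queue lam =
        if k = m0 ∧ Dl M li l lam then [fl li i lam] else [] := by
  set B := betaAdv M li l i inti y m0 Ftc with hB
  intro k
  induction k with
  | zero =>
    intro hk lam
    rw [if_neg (fun h => by omega)]
    rfl
  | succ s ih =>
    intro hk lam
    have hql : (runOf Q B s).1.queue lam = [] := by
      rw [ih (by omega) lam, if_neg (fun h => by omega)]
    show (step (Eintent kin kout) Q (runOf Q B s)).1.queue lam = _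
    rw [step_env]
    dsimp only
    rw [hql]
    have htime : (runOf Q B s).1.time = s := runOf_time Q B s
    have hadv : (runOf Q B s).1.adv = B := runOf_adv Q B s
    rw [htime, hadv]
    by_cases hsm : s + 1 = m0
    · by_cases hD : Dl M li l lam
      · have hex : ∃ x l', B.arrive x = (s + 1, lam, l') := by
          refine ⟨fl li i lam, Wl M li l inti y lam, ?_⟩
          show betaArr M li l i inti y m0 (fl li i lam) = _
          rw [betaArr_des hD, hsm]
        rw [dif_pos hex, if_pos ⟨hsm, hD⟩]
        obtain ⟨w, hw⟩ := hex.choose_spec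
        have heq : ((s + 1 : ℕ), lam, w) = (m0, lam, w) := by rw [hsm]
        have hch := (betaArr_inv (show betaArr M li l i inti y m0 hex.choose
          = (m0, lam, w) from hw.trans heq)).1
        show [hex.choose] = [fl li i lam]
        rw [hch]
      · have hex : ¬ ∃ x l', B.arrive x = (s + 1, lam, l') := by
          rintro ⟨x, w, hx⟩
          have heq : ((s + 1 : ℕ), lam, w) = (m0, lam, w) := by rw [hsm]
          exact hD (betaArr_inv (show betaArr M li l i inti y m0 x
            = (m0, lam, w) from hx.trans heq)).2.1
        rw [dif_neg hex, if_neg (fun h => hD h.2)]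
        rfl
    · have hex : ¬ ∃ x l', B.arrive x = (s + 1, lam, l') := by
        rintro ⟨x, w, hx⟩
        have := congrArg Prod.fst hx
        dsimp only at this
        rcases betaArr_time (M := M) (li := li) (l := l) (i := i) (inti := inti)
          (y := y) (m0 := m0) x with h | h
        · rw [show (B.arrive x) = betaArr M li l i inti y m0 x from rfl] at this
          omega
        · rw [show (B.arrive x) = betaArr M li l i inti y m0 x from rfl] at this
          omega
      rw [dif_neg hex, if_neg (fun h => hsm h.1)]
      rfl

lemma beta_front (Q : Prot kin kout (Set (Move kin kout)) ℕ) (Ftc : ℕ → Bool)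
    (hm0 : 1 ≤ m0) {lam : Fin kin} (hD : Dl M li l lam) :
    ((runOf Q (betaAdv M li l i inti y m0 Ftc) m0).1.queue lam).head? =
      some (fl li i lam) := by
  rw [beta_queue Q Ftc hm0 m0 le_rfl lam, if_pos ⟨rfl, hD⟩]
  rfl

lemma beta_intent (Q : Prot kin kout (Set (Move kin kout)) ℕ) (Ftc : ℕ → Bool)
    {lam : Fin kin} (hD : Dl M li l lam) (k : ℕ) :
    intentOf (runOf Q (betaAdv M li l i inti y m0 Ftc) k).1 (fl li i lam) =
      Wl M li l inti y lam := by
  unfold intentOf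
  rw [runOf_adv]
  show (betaArr M li l i inti y m0 (fl li i lam)).2.2 = _
  rw [betaArr_des hD]

lemma beta_gos (Q : Prot kin kout (Set (Move kin kout)) ℕ) (Ftc : ℕ → Bool)
    (hm0 : 1 ≤ m0) {k : ℕ} (hk : k < m0) :
    GOs (runOf Q (betaAdv M li l i inti y m0 Ftc)) k = ∅ := by
  ext x
  simp only [GOs, Set.mem_setOf_eq, Set.mem_empty_iff_false, iff_false]
  rintro ⟨⟨lam, hlam⟩, -⟩
  rw [beta_queue Q Ftc hm0 k (by omega) lam, if_neg (fun h => by omega)] at hlam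
  simp at hlam

/-- The memory of every front agent at time `m0` in the β-run is exactly `M`. -/
lemma beta_frontmsgs (Q : Prot kin kout (Set (Move kin kout)) ℕ)
    (hMuniq : ∀ (lam : Fin kin) (w w' : Fin kout), (lam, w) ∈ M → (lam, w') ∈ M → w = w')
    (hWin : ∀ (lam : Fin kin) (w : Fin kout), (lam, w) ∈ M → Wl M li l inti y lam = w)
    (hm0 : 1 ≤ m0) (n : ℕ) :
    FrontMsgs (runOf Q (betaAdv M li l i inti y m0
        (fun x => decide (∃ lam : Fin kin, Dl M li l lam ∧ fl li i lam = x ∧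
          (lam, Wl M li l inti y lam) ∈ M))) m0).1 n = M := by
  set Ftc : ℕ → Bool := fun x => decide (∃ lam : Fin kin, Dl M li l lam ∧
    fl li i lam = x ∧ (lam, Wl M li l inti y lam) ∈ M) with hFtc
  set B := betaAdv M li l i inti y m0 Ftc with hB
  have hadv : (runOf Q B m0).1.adv = B := runOf_adv Q B m0
  ext mv
  constructor
  · rintro ⟨j, lam, hhead, hFt, rfl⟩
    have hq := beta_queue (M := M) (li := li) (l := l) (i := i) (inti := inti)
      (y := y) Q Ftc hm0 m0 le_rfl lam
    by_cases hD : m0 = m0 ∧ Dl M li l lam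
    · rw [hq, if_pos hD] at hhead
      have hj : j = fl li i lam := by
        simp at hhead
        exact hhead.symm
      rw [hadv] at hFt
      have hFt' : Ftc j = true := hFt
      rw [hFtc] at hFt'
      have hex := of_decide_eq_true hFt'
      obtain ⟨lam', hD', hfl', hmem'⟩ := hex
      have hll : lam' = lam := fl_inj li i (by rw [hfl', hj])
      rw [hll] at hmem'
      have hint : intentOf (runOf Q B m0).1 j = Wl M li l inti y lam := by
        rw [hj]
        exact beta_intent Q Ftc hD.2 m0
      rw [hint]
      exact hmem'
    · rw [hq, if_neg hD] at hhead
      simp at hhead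
  · intro hmv
    obtain ⟨lam, w⟩ := mv
    have hD : Dl M li l lam := Or.inr (Or.inr ⟨w, hmv⟩)
    refine ⟨fl li i lam, lam, beta_front Q Ftc hm0 hD, ?_, ?_⟩
    · rw [hadv]
      show Ftc (fl li i lam) = true
      rw [hFtc]
      refine decide_eq_true ⟨lam, hD, rfl, ?_⟩
      rw [hWin lam w hmv]
      exact hmv
    · rw [beta_intent Q Ftc hD, hWin lam w hmv]

end Beta
section LexOpt

variable {kin kout : ℕ}

lemma reading_eq {e e' : EnvState kin kout} (hInv : Inv e) (hInv' : Inv e')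
    {i : ℕ} {l : Fin kin} (h : (e.queue l).head? = some i)
    (h' : (e'.queue l).head? = some i)
    (hint : intentOf e i = intentOf e' i) :
    minimalReading e i = minimalReading e' i := by
  have h1 := reading_lane hInv (head?_mem h)
  have h2 := reading_lane hInv' (head?_mem h')
  have hf : (minimalReading e i).front = (minimalReading e' i).front := by
    rw [reading_front, reading_front]
    exact propext (iff_of_true ⟨l, h⟩ ⟨l, h'⟩)
  show (⟨(minimalReading e i).front, (minimalReading e i).lane,
      (minimalReading e i).intent⟩ : Reading kin kout) =
    ⟨(minimalReading e' i).front, (minimalReading e' i).lane,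
      (minimalReading e' i).intent⟩
  rw [hf, h1, h2, reading_intent, reading_intent, hint]

lemma lexopt (hkin : 0 < kin) (O : Move kin kout → Move kin kout → Prop)
    {F : Set (Adversary kin kout)}
    (hFrF : ∀ α ∈ F, ∀ k i, α.Fr k i = true)
    (hClosed : ∀ (M : Set (Move kin kout)) (li l : Fin kin) (i : ℕ) (inti y : Fin kout)
      (m0 : ℕ) (Ftc : ℕ → Bool), betaAdv M li l i inti y m0 Ftc ∈ F) :
    LexOptimal O (gammaIntent kin kout F) (Pintent hkin O) := by
  rintro ⟨P', hIP, hlex, hnot⟩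
  unfold LexDominates at hnot
  push_neg at hnot
  obtain ⟨r, hr, r', hr', h0, hA, hB⟩ := hnot
  have hm0ex : ∃ m, GOs r m ≠ GOs r' m := hA
  set m0 := Nat.find hm0ex with hm0def
  have hm0 : GOs r m0 ≠ GOs r' m0 := Nat.find_spec hm0ex
  have hbefore : ∀ k < m0, GOs r k = GOs r' k := fun k hk =>
    of_not_not (Nat.find_min hm0ex hk)
  have hsub : GOs r m0 ⊂ GOs r' m0 := by
    rcases hlex r' hr' r hr h0.symm with hal | ⟨m, hks, hnem, hsubm⟩
    · exact absurd (hal m0).symm hm0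
    · have hm_eq : m = m0 := by
        have h1 : m0 ≤ m := Nat.find_min' hm0ex (fun hc => hnem hc.symm)
        rcases Nat.lt_or_ge m0 m with h2 | h2
        · exact absurd (hks m0 h2).symm hm0
        · omega
      rw [hm_eq] at hsubm
      exact hsubm
  have hm0pos : 1 ≤ m0 := by
    rcases Nat.eq_zero_or_pos m0 with h | h
    · exfalso
      apply hm0
      rw [h, GOs_zero hr, GOs_zero hr']
    · exact h
  obtain ⟨n, hn⟩ : ∃ n, m0 = n + 1 := ⟨m0 - 1, by omega⟩
  have hre : r m0 = r' m0 := runs_eq hr hr' h0 hbefore m0 le_rfl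
  obtain ⟨i, hiY, hiN⟩ := Set.not_subset.mp hsub.2
  have hgi' : goingAt r' m0 i := hiY
  obtain ⟨li, hli'⟩ := hgi'.1
  have hli : ((r m0).1.queue li).head? = some i := by rw [hre]; exact hli'
  have hfi : frontAt r m0 i := ⟨li, hli⟩
  have hFr : ∀ k x, (r 0).1.adv.Fr k x = true := hFrF _ hr.1.1
  have hInvα := run_inv hr m0
  have hM : ((r m0).2 i).1 = FrontMsgs (r m0).1 n := by
    have h1 := run_mem hr hFr (show frontAt r (n + 1) i by rw [← hn]; exact hfi)
    rw [← hn] at h1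
    exact h1
  set M := FrontMsgs (r m0).1 n with hMdef
  set nxt := nextL hkin m0 with hnxtdef
  set inti := intentOf (r m0).1 i with hintidef
  have hactPi : Pintent hkin O i ((r m0).2 i) ≠ Act.go := by
    intro h
    exact hiN ((going_iff hr hfi).mpr h)
  have hnc : ¬ compatAll O (PosSet hkin O M nxt li) (li, inti) := by
    intro hc
    apply hactPi
    rw [run_state_eq hr m0 i, hM]
    exact (Pintent_eval hkin O i M (reading_lane hInvα (head?_mem hli)) hfi m0).mpr hc
  obtain ⟨mv', hmv'S, hnotO⟩ : ∃ mv' ∈ PosSet hkin O M nxt li, ¬ O (li, inti) mv' := by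
    by_contra hall
    push_neg at hall
    exact hnc fun mv hm => hall mv hm
  obtain ⟨l, y⟩ := mv'
  have hbound : distC nxt li ≤ kin := le_of_lt (distC_lt hkin _ _)
  obtain ⟨hstage, hcomp', hMent⟩ := posStage_mem hkin O M nxt hbound hmv'S
  have hlli : l ≠ li := by
    intro h
    rw [show ((l, y) : Move kin kout).1 = l from rfl, h] at hstage
    exact lt_irrefl _ hstage
  have hMuniq : ∀ (lam : Fin kin) (w w' : Fin kout), (lam, w) ∈ M → (lam, w') ∈ M →
      w = w' := fun lam w w' h1 h2 => FrontMsgs_unique h1 h2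
  have hWli : ∀ w, (li, w) ∈ M → w = inti := by
    rintro w ⟨j', lam', hh', -, heq⟩
    have h1 : lam' = li := (congrArg Prod.fst heq).symm
    subst h1
    have h2 : j' = i := Option.some_injective _ (hh'.symm.trans hli)
    have h3 := congrArg Prod.snd heq
    dsimp only at h3
    rw [h3, h2]
  have hWl : ∀ w, (l, w) ∈ M → w = y := by
    intro w hw
    exact hMuniq l w y hw (hMent ⟨w, hw⟩)
  have hWin : ∀ (lam : Fin kin) (w : Fin kout), (lam, w) ∈ M →
      Wl M li l inti y lam = w := by
    intro lam w hw
    unfold Wl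
    by_cases h1 : lam = li
    · rw [if_pos h1]
      subst h1
      exact (hWli w hw).symm
    · rw [if_neg h1]
      by_cases h2 : lam = l
      · rw [if_pos h2]
        subst h2
        exact (hWl w hw).symm
      · have hp : ∃ w, (lam, w) ∈ M := ⟨w, hw⟩
        rw [if_neg h2, dif_pos hp]
        exact hMuniq lam hp.choose w hp.choose_spec hw
  -- the β-adversary and its runs
  set Ftc : ℕ → Bool := fun x => decide (∃ lam : Fin kin, Dl M li l lam ∧
    fl li i lam = x ∧ (lam, Wl M li l inti y lam) ∈ M) with hFtcdef
  set B := betaAdv M li l i inti y m0 Ftc with hBdef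
  have hBF : B ∈ F := hClosed M li l i inti y m0 Ftc
  have hrP : runOf (Pintent hkin O) B ∈ Runs (gammaIntent kin kout F) (Pintent hkin O) :=
    runOf_mem _ hBF
  have hrQ : runOf P' B ∈ Runs (gammaIntent kin kout F) P' := runOf_mem _ hBF
  set rP := runOf (Pintent hkin O) B with hrPdef
  set rQ := runOf P' B with hrQdef
  have h0' : rQ 0 = rP 0 := rfl
  have hFrB : ∀ (Q : Prot kin kout (Set (Move kin kout)) ℕ) k x,
      ((runOf Q B 0).1).adv.Fr k x = true := fun _ _ _ => rfl
  have hFMP : FrontMsgs (rP m0).1 n = M :=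
    beta_frontmsgs (Pintent hkin O) hMuniq hWin hm0pos n
  have hFMQ : FrontMsgs (rQ m0).1 n = M :=
    beta_frontmsgs P' hMuniq hWin hm0pos n
  have hDli : Dl M li l li := Or.inl rfl
  have hDl2 : Dl M li l l := Or.inr (Or.inl rfl)
  have hfli : fl li i li = i := if_pos rfl
  set j := fl li i l with hjdef
  have hij : i ≠ j := by
    rw [hjdef]
    unfold fl
    rw [if_neg hlli]
    omega
  have hfrPi : ((rP m0).1.queue li).head? = some i := by
    have h1 := beta_front (M := M) (li := li) (l := l) (i := i) (inti := inti) (y := y)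
      (m0 := m0) (Pintent hkin O) Ftc hm0pos hDli
    rw [hfli] at h1
    exact h1
  have hfrQi : ((rQ m0).1.queue li).head? = some i := by
    have h1 := beta_front (M := M) (li := li) (l := l) (i := i) (inti := inti) (y := y)
      (m0 := m0) P' Ftc hm0pos hDli
    rw [hfli] at h1
    exact h1
  have hfrPj : ((rP m0).1.queue l).head? = some j :=
    beta_front (M := M) (li := li) (l := l) (i := i) (inti := inti) (y := y)
      (m0 := m0) (Pintent hkin O) Ftc hm0pos hDl2
  have hfrQj : ((rQ m0).1.queue l).head? = some j :=
    beta_front (M := M) (li := li) (l := l) (i := i) (inti := inti) (y := y)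
      (m0 := m0) P' Ftc hm0pos hDl2
  have hWlli : Wl M li l inti y li = inti := if_pos rfl
  have hWll : Wl M li l inti y l = y := by
    unfold Wl
    rw [if_neg hlli, if_pos rfl]
  have hintPi : intentOf (rP m0).1 i = inti := by
    rw [← hfli]
    rw [beta_intent (Pintent hkin O) Ftc hDli m0, hWlli]
  have hintQi : intentOf (rQ m0).1 i = inti := by
    rw [← hfli]
    rw [beta_intent P' Ftc hDli m0, hWlli]
  have hintPj : intentOf (rP m0).1 j = y := by
    rw [hjdef, beta_intent (Pintent hkin O) Ftc hDl2 m0, hWll]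
  have hintQj : intentOf (rQ m0).1 j = y := by
    rw [hjdef, beta_intent P' Ftc hDl2 m0, hWll]
  -- memories at m0 in the β-runs
  have hMemPi : ((rP m0).2 i).1 = M := by
    have h1 := run_mem hrP (hFrB (Pintent hkin O))
      (show frontAt rP (n + 1) i by rw [← hn]; exact ⟨li, hfrPi⟩)
    rw [← hn] at h1
    rw [h1, hFMP]
  have hMemPj : ((rP m0).2 j).1 = M := by
    have h1 := run_mem hrP (hFrB (Pintent hkin O))
      (show frontAt rP (n + 1) j by rw [← hn]; exact ⟨l, hfrPj⟩)
    rw [← hn] at h1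
    rw [h1, hFMP]
  have hMemQi : ((rQ m0).2 i).1 = M := by
    have h1 := run_mem hrQ (hFrB P')
      (show frontAt rQ (n + 1) i by rw [← hn]; exact ⟨li, hfrQi⟩)
    rw [← hn] at h1
    rw [h1, hFMQ]
  -- Pintent sends j at m0 in the β-run
  have hgoPj : goingAt rP m0 j := by
    apply (going_iff hrP ⟨l, hfrPj⟩).mpr
    rw [run_state_eq hrP m0 j, hMemPj]
    apply (Pintent_eval hkin O j M (reading_lane (run_inv hrP m0) (head?_mem hfrPj))
      ⟨l, hfrPj⟩ m0).mpr
    have hintj : (minimalReading (rP m0).1 j).intent = y := by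
      rw [reading_intent, hintPj]
    rw [hintj]
    exact hcomp'
  -- Pintent refuses i at m0 in the β-run
  have hnotPi : i ∉ GOs rP m0 := by
    intro hg
    have hact := (going_iff hrP ⟨li, hfrPi⟩).mp hg
    rw [run_state_eq hrP m0 i, hMemPi] at hact
    have hcomp := (Pintent_eval hkin O i M
      (reading_lane (run_inv hrP m0) (head?_mem hfrPi)) ⟨li, hfrPi⟩ m0).mp hact
    have hinti2 : (minimalReading (rP m0).1 i).intent = inti := by
      rw [reading_intent, hintPi]
    rw [hinti2] at hcomp
    exact hnc hcomp
  -- P' sends i at m0 in the β-run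
  have hstateQi : (rQ m0).2 i = (r' m0).2 i := by
    rw [run_state_eq hrQ m0 i, run_state_eq hr' m0 i, hMemQi]
    rw [show ((r' m0).2 i).1 = M from by rw [← hre]; exact hM]
    rw [reading_eq (run_inv hrQ m0) (run_inv hr' m0) hfrQi hli'
      (by rw [hintQi, ← hre])]
  have hgoQi : goingAt rQ m0 i := by
    apply (going_iff hrQ ⟨li, hfrQi⟩).mpr
    rw [hstateQi]
    exact (going_iff hr' hgi'.1).mp hgi'
  have hgosbefore : ∀ k < m0, GOs rQ k = GOs rP k := by
    intro k hk
    rw [beta_gos P' Ftc hm0pos hk, beta_gos (Pintent hkin O) Ftc hm0pos hk]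
  have hsubβ : GOs rP m0 ⊂ GOs rQ m0 := by
    have hne' : GOs rQ m0 ≠ GOs rP m0 := by
      intro heq
      exact hnotPi (heq ▸ hgoQi)
    rcases hlex rQ hrQ rP hrP h0' with hal | ⟨m, hks, hnem, hsubm⟩
    · exact absurd (hal m0) hne'
    · have hmeq : m = m0 := by
        rcases Nat.lt_or_ge m m0 with h2 | h2
        · exact absurd (hgosbefore m h2) hnem
        · rcases Nat.lt_or_ge m0 m with h3 | h3
          · exact absurd (hks m0 h3) hne'
          · omega
      rw [hmeq] at hsubm
      exact hsubm
  have hgoQj : goingAt rQ m0 j := hsubβ.1 hgoPj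
  have hmovei : moveAt (rQ m0).1 i = some (li, inti) := by
    rw [moveAt_front (run_inv hrQ m0) hfrQi, hintQi]
  have hmovej : moveAt (rQ m0).1 j = some (l, y) := by
    rw [moveAt_front (run_inv hrQ m0) hfrQj, hintQj]
  exact hnotO (hIP.2.1 rQ hrQ m0 i j hij hgoQi hgoQj _ _ hmovei hmovej)

end LexOpt
end Inter

open Inter

/-- `P^intent` is an intersection protocol (Validity, Safety, Liveness)
and is lexicographically optimal with respect to `γ_intent(F)` for each `F ∈ {CR, SO}`. -/
theorem Pintent_intersection_protocol_and_lex_optimal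
    {kin kout : ℕ} (hkin : 0 < kin)
    (O : Move kin kout → Move kin kout → Prop)
    (hO : ∀ a b, O a b → O b a) :
    ∀ F ∈ ({CRadv kin kout, SOadv kin kout} : Set (Set (Adversary kin kout))),
      IsIntersectionProtocol O (gammaIntent kin kout F) (Pintent hkin O) ∧
      LexOptimal O (gammaIntent kin kout F) (Pintent hkin O) := by
  intro F hF
  simp only [Set.mem_insert_iff, Set.mem_singleton_iff] at hF
  have hFrF : ∀ α ∈ F, ∀ k i, α.Fr k i = true := by
    rcases hF with rfl | rfl
    · exact fun α hα k i => hα.1 k i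
    · exact fun α hα k i => hα k i
  have hClosed : ∀ (M : Set (Move kin kout)) (li l : Fin kin) (i : ℕ)
      (inti y : Fin kout) (m0 : ℕ) (Ftc : ℕ → Bool),
      betaAdv M li l i inti y m0 Ftc ∈ F := by
    rcases hF with rfl | rfl
    · intro M li l i inti y m0 Ftc
      exact ⟨fun _ _ => rfl, fun k x hfalse k' _ => hfalse⟩
    · intro M li l i inti y m0 Ftc
      exact fun _ _ => rfl
  exact ⟨⟨validity_P hkin O, safety_P hkin O hO hFrF, liveness_P hkin O⟩,
    lexopt hkin O hFrF hClosed⟩
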